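/- For a prime p ≥ 5 and nonzero λ, b ∈ F_p, the number of solutions (X, Y) ∈ F_p^* × F_p^* of the equation X + Y + λ/(XY) = b equals the number of points (U, V) ∈ F_p² with V ≠ 0 on the curve U² = 4V³ + (bV + λ)². -/

import Mathlib

theorem stmt_8 (p : ℕ) [Fact p.Prime] (hp : 5 ≤ p) (l b : ZMod p)
    (hl : l ≠ 0) (hb : b ≠ 0) :
    Set.ncard {XY : ZMod p × ZMod p |
        XY.1 ≠ 0 ∧ XY.2 ≠ 0 ∧ XY.1 + XY.2 + l / (XY.1 * XY.2) = b} =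
    Set.ncard {UV : ZMod p × ZMod p |
        UV.2 ≠ 0 ∧ UV.1 ^ 2 = 4 * UV.2 ^ 3 + (b * UV.2 + l) ^ 2} := by
  have hp2 : (2 : ZMod p) ≠ 0 := by
    intro h2
    have h : ((2 : ℕ) : ZMod p) = 0 := by push_cast; exact h2
    have := (ZMod.natCast_eq_zero_iff 2 p).mp h
    have := Nat.le_of_dvd (by norm_num) this
    omega
  set f : ZMod p × ZMod p → ZMod p × ZMod p :=
    fun XY => (b * (-l / XY.2) + l + 2 * (-l / XY.2) ^ 2 / XY.1, -l / XY.2) with hf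
  have hbij : Set.BijOn f
      {XY : ZMod p × ZMod p |
        XY.1 ≠ 0 ∧ XY.2 ≠ 0 ∧ XY.1 + XY.2 + l / (XY.1 * XY.2) = b}
      {UV : ZMod p × ZMod p |
        UV.2 ≠ 0 ∧ UV.1 ^ 2 = 4 * UV.2 ^ 3 + (b * UV.2 + l) ^ 2} := by
    refine ⟨?_, ?_, ?_⟩
    · rintro ⟨X, Y⟩ ⟨hX, hY, hE⟩
      dsimp only at hX hY hE
      have hV : -l / Y ≠ 0 := div_ne_zero (neg_ne_zero.mpr hl) hY
      refine ⟨hV, ?_⟩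
      simp only [hf]
      field_simp at hE ⊢
      linear_combination 4 * l * hE
    · rintro ⟨X1, Y1⟩ ⟨hX1, hY1, hE1⟩ ⟨X2, Y2⟩ ⟨hX2, hY2, hE2⟩ h
      dsimp only at hX1 hY1 hX2 hY2
      simp only [hf, Prod.mk.injEq] at h
      obtain ⟨h1, h2⟩ := h
      have hY : Y1 = Y2 := by
        field_simp at h2
        exact (neg_inj.mp h2).symm
      subst hY
      have hnum : 2 * (-l / Y1) ^ 2 ≠ 0 :=
        mul_ne_zero hp2 (pow_ne_zero 2 (div_ne_zero (neg_ne_zero.mpr hl) hY1))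
      have h3 : 2 * (-l / Y1) ^ 2 / X1 = 2 * (-l / Y1) ^ 2 / X2 := add_left_cancel h1
      have hX : X1 = X2 := by
        rw [div_eq_div_iff hX1 hX2] at h3
        have := mul_left_cancel₀ hnum (by linear_combination h3 :
          2 * (-l / Y1) ^ 2 * X2 = 2 * (-l / Y1) ^ 2 * X1)
        exact this.symm
      simp [hX]
    · rintro ⟨U, V⟩ ⟨hV, hE⟩
      dsimp only at hV hE
      have hD : U - b * V - l ≠ 0 := by
        intro h
        have hU : U = b * V + l := by linear_combination h
        rw [hU] at hE
        have h4V : (4 : ZMod p) * V ^ 3 = 0 := by linear_combination -hE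
        have h4 : (4 : ZMod p) ≠ 0 := by
          have : (4 : ZMod p) = 2 * 2 := by norm_num
          rw [this]; exact mul_ne_zero hp2 hp2
        rcases mul_eq_zero.mp h4V with h' | h'
        · exact h4 h'
        · exact hV (pow_eq_zero_iff (by norm_num) |>.mp h')
      have hX : 2 * V ^ 2 / (U - b * V - l) ≠ 0 :=
        div_ne_zero (mul_ne_zero hp2 (pow_ne_zero 2 hV)) hD
      have hYne : -l / V ≠ 0 := div_ne_zero (neg_ne_zero.mpr hl) hV
      refine ⟨(2 * V ^ 2 / (U - b * V - l), -l / V), ⟨hX, hYne, ?_⟩, ?_⟩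
      · dsimp only
        have hden : -((U - b * V - l) * V * (2 * V ^ 2 * l)) ≠ 0 :=
          neg_ne_zero.mpr (mul_ne_zero (mul_ne_zero hD hV)
            (mul_ne_zero (mul_ne_zero hp2 (pow_ne_zero 2 hV)) hl))
        have hD' : U - V * b - l ≠ 0 := by rwa [mul_comm V b]
        field_simp
        linear_combination -hE
      · simp only [hf]
        have hVV : -l / (-l / V) = V := by field_simp
        rw [hVV]
        have h2V : 2 * V ^ 2 / (2 * V ^ 2 / (U - b * V - l)) = U - b * V - l := by
          rw [div_div_eq_mul_div]
          rw [mul_div_assoc, mul_comm,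
            div_mul_cancel₀ _ (mul_ne_zero hp2 (pow_ne_zero 2 hV))]
        rw [h2V]
        ext <;> dsimp <;> ring
  rw [← hbij.image_eq]
  exact (Set.ncard_image_of_injOn hbij.injOn).symm
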